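/- arXiv:2105.07868 — 3 statements merged into one kernel-verified Lean document; each statement's English description precedes it below -/
import Mathlib

section
/- If X ⊆ S^{n-1}(r) is a spherical 4-design and H is a symmetric traceless n×n real matrix, then ∑_{x ∈ X} (xᵀ H x)² = (2 r⁴ |X| / (n(n+2))) · Tr(H²). -/
open MvPolynomial

/-- The Laplacian of a multivariate polynomial. -/
noncomputable def mvLaplacian {n : ℕ} (p : MvPolynomial (Fin n) ℝ) : MvPolynomial (Fin n) ℝ :=
  ∑ i, pderiv i (pderiv i p)

/-- `X` is a spherical `t`-design on the sphere of radius `r` in `ℝ^n`: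
all points lie on the sphere, and every homogeneous harmonic polynomial of degree
`1, …, t` sums to zero over `X`. -/
def IsSphericalDesign (n t : ℕ) (r : ℝ) (X : Finset (EuclideanSpace ℝ (Fin n))) : Prop :=
  (∀ x ∈ X, ‖x‖ = r) ∧
  ∀ d : ℕ, 1 ≤ d → d ≤ t → ∀ p : MvPolynomial (Fin n) ℝ,
    p.IsHomogeneous d → mvLaplacian p = 0 →
    ∑ x ∈ X, MvPolynomial.eval (fun i => x i) p = 0


open Matrix

noncomputable def quadPoly {n : ℕ} (M : Matrix (Fin n) (Fin n) ℝ) : MvPolynomial (Fin n) ℝ :=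
  ∑ i, ∑ j, C (M i j) * X i * X j

lemma quadPoly_isHomogeneous {n : ℕ} (M : Matrix (Fin n) (Fin n) ℝ) :
    (quadPoly M).IsHomogeneous 2 := by
  apply IsHomogeneous.sum
  intro i _
  apply IsHomogeneous.sum
  intro j _
  have : (0 : ℕ) + 1 + 1 = 2 := rfl
  exact this ▸ ((isHomogeneous_C _ _).mul (isHomogeneous_X _ _)).mul (isHomogeneous_X _ _)

lemma eval_quadPoly {n : ℕ} (M : Matrix (Fin n) (Fin n) ℝ) (x : Fin n → ℝ) :
    eval x (quadPoly M) = dotProduct x (M.mulVec x) := by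
  simp only [quadPoly, map_sum, eval_mul, eval_C, eval_X, dotProduct, Matrix.mulVec,
    Finset.mul_sum]
  apply Finset.sum_congr rfl
  intro i _
  apply Finset.sum_congr rfl
  intro j _
  ring

lemma pderiv_quadPoly {n : ℕ} (M : Matrix (Fin n) (Fin n) ℝ) (k : Fin n) :
    pderiv k (quadPoly M) = ∑ j, C (M k j + M j k) * X j := by
  simp only [quadPoly, map_sum, pderiv_mul, pderiv_C, pderiv_X, zero_mul, zero_add,
    Pi.single_apply, mul_ite, mul_one, mul_zero, ite_mul, zero_mul, Finset.sum_add_distrib,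
    Finset.sum_ite_eq, Finset.sum_ite_eq', Finset.mem_univ, if_true, map_add, add_mul]
  congr 1
  rw [Finset.sum_comm]
  simp

lemma pderiv_linear {n : ℕ} (a : Fin n → ℝ) (k : Fin n) :
    pderiv k (∑ j, C (a j) * X j) = C (a k) := by
  simp [pderiv_mul, pderiv_C, pderiv_X, Pi.single_apply, mul_ite, mul_one, mul_zero,
    Finset.sum_ite_eq', Finset.mem_univ]

lemma lap_quadPoly {n : ℕ} (M : Matrix (Fin n) (Fin n) ℝ) :
    mvLaplacian (quadPoly M) = C (2 * M.trace) := by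
  unfold mvLaplacian
  simp only [pderiv_quadPoly, pderiv_linear]
  rw [← map_sum]
  congr 1
  simp [Matrix.trace, Matrix.diag, two_mul, Finset.sum_add_distrib]

lemma cross_sum {n : ℕ} (M N : Matrix (Fin n) (Fin n) ℝ) (hM : Mᵀ = M) (hN : Nᵀ = N) :
    ∑ k, pderiv k (quadPoly M) * pderiv k (quadPoly N) = C 4 * quadPoly (M * N) := by
  have hM' : ∀ i j, M i j = M j i := fun i j => by nth_rewrite 1 [← hM]; rw [Matrix.transpose_apply]
  have hN' : ∀ i j, N i j = N j i := fun i j => by nth_rewrite 1 [← hN]; rw [Matrix.transpose_apply]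
  simp_rw [pderiv_quadPoly, Finset.sum_mul_sum]
  rw [Finset.sum_comm]
  have step : ∀ i : Fin n, ∑ j : Fin n, ∑ k : Fin n,
      (C (M k i + M i k) * X i) * (C (N k j + N j k) * X j)
      = ∑ j : Fin n, C 4 * (C ((M * N) i j) * X i * X j) := by
    intro i
    apply Finset.sum_congr rfl
    intro j _
    have e : ∀ k : Fin n, (C (M k i + M i k) * X i) * (C (N k j + N j k) * X j)
        = C (4 * (M i k * N k j)) * (X i * X j) := by
      intro k
      have h4 : (4 : ℝ) * (M i k * N k j) = (M k i + M i k) * (N k j + N j k) := by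
        rw [hM' k i, hN' j k]; ring
      rw [h4, C_mul]
      ring
    simp_rw [e]
    rw [← Finset.sum_mul, ← map_sum, ← Finset.mul_sum, _root_.map_mul,
      show ((M * N) i j) = ∑ k, M i k * N k j from rfl]
    ring
  trans (∑ i : Fin n, ∑ j : Fin n, C 4 * (C ((M * N) i j) * X i * X j))
  · exact Finset.sum_congr rfl fun i _ => Finset.sum_comm.trans (step i)
  · rw [quadPoly, Finset.mul_sum]
    exact Finset.sum_congr rfl fun i _ => by rw [Finset.mul_sum]

lemma lap_mul {n : ℕ} (M N : Matrix (Fin n) (Fin n) ℝ) (hM : Mᵀ = M) (hN : Nᵀ = N) :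
    mvLaplacian (quadPoly M * quadPoly N) =
      C (2 * N.trace) * quadPoly M + C (2 * M.trace) * quadPoly N + C 8 * quadPoly (M * N) := by
  unfold mvLaplacian
  have hk : ∀ k : Fin n, pderiv k (pderiv k (quadPoly M * quadPoly N))
      = pderiv k (pderiv k (quadPoly M)) * quadPoly N
        + 2 * (pderiv k (quadPoly M) * pderiv k (quadPoly N))
        + quadPoly M * pderiv k (pderiv k (quadPoly N)) := by
    intro k
    rw [pderiv_mul, map_add, pderiv_mul, pderiv_mul]
    ring
  simp_rw [hk]
  rw [Finset.sum_add_distrib, Finset.sum_add_distrib, ← Finset.sum_mul, ← Finset.mul_sum,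
    ← Finset.mul_sum, cross_sum M N hM hN,
    show (∑ k : Fin n, pderiv k (pderiv k (quadPoly M))) = C (2 * M.trace) from lap_quadPoly M,
    show (∑ k : Fin n, pderiv k (pderiv k (quadPoly N))) = C (2 * N.trace) from lap_quadPoly N]
  have h8 : (C (8:ℝ) : MvPolynomial (Fin n) ℝ) = 2 * C 4 := by
    rw [show (8:ℝ) = 2 * 4 by norm_num, C_mul, map_ofNat]
  rw [h8]
  ring

lemma lap_smul {n : ℕ} (a : ℝ) (p : MvPolynomial (Fin n) ℝ) :
    mvLaplacian (a • p) = a • mvLaplacian p := by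
  unfold mvLaplacian
  simp [LinearMap.map_smul, Finset.smul_sum]

lemma lap_add {n : ℕ} (p q : MvPolynomial (Fin n) ℝ) :
    mvLaplacian (p + q) = mvLaplacian p + mvLaplacian q := by
  unfold mvLaplacian
  simp [Finset.sum_add_distrib]

lemma lap_sub {n : ℕ} (p q : MvPolynomial (Fin n) ℝ) :
    mvLaplacian (p - q) = mvLaplacian p - mvLaplacian q := by
  unfold mvLaplacian
  simp [Finset.sum_sub_distrib]

lemma lap_quadPoly' {n : ℕ} (M : Matrix (Fin n) (Fin n) ℝ) :
    mvLaplacian (quadPoly M) = (2 * M.trace) • (1 : MvPolynomial (Fin n) ℝ) := by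
  rw [lap_quadPoly, smul_eq_C_mul, mul_one]

lemma lap_mul' {n : ℕ} (M N : Matrix (Fin n) (Fin n) ℝ) (hM : Mᵀ = M) (hN : Nᵀ = N) :
    mvLaplacian (quadPoly M * quadPoly N) =
      (2 * N.trace) • quadPoly M + (2 * M.trace) • quadPoly N + (8:ℝ) • quadPoly (M * N) := by
  rw [lap_mul M N hM hN, smul_eq_C_mul, smul_eq_C_mul, smul_eq_C_mul]

lemma homog_smul {n : ℕ} {k : ℕ} (a : ℝ) {p : MvPolynomial (Fin n) ℝ}
    (hp : p.IsHomogeneous k) : (a • p).IsHomogeneous k := by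
  rw [smul_eq_C_mul]
  simpa using (isHomogeneous_C _ a).mul hp

open Matrix in
theorem spherical_four_design_sum_quadform_sq {n : ℕ} (hn : 0 < n) (r : ℝ) (hr : 0 < r)
    (X : Finset (EuclideanSpace ℝ (Fin n))) (hX : IsSphericalDesign n 4 r X)
    (H : Matrix (Fin n) (Fin n) ℝ) (hH : Hᵀ = H) (htr : Matrix.trace H = 0) :
    ∑ x ∈ X, ((fun i => x i) ⬝ᵥ (H *ᵥ (fun i => x i))) ^ 2
      = 2 * r ^ 4 * X.card / (n * (n + 2)) * Matrix.trace (H * H) := by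
  obtain ⟨hX1, hX2⟩ := hX
  have hX : (∀ x ∈ X, ‖x‖ = r) ∧
      (∀ d : ℕ, 1 ≤ d → d ≤ 4 → ∀ p : MvPolynomial (Fin n) ℝ,
        p.IsHomogeneous d → mvLaplacian p = 0 →
        ∑ x ∈ X, MvPolynomial.eval (fun i => x i) p = 0) := ⟨hX1, hX2⟩
  set c : ℝ := Matrix.trace (H * H) with hc
  have hHH : (H * H)ᵀ = H * H := by rw [Matrix.transpose_mul, hH]
  have h1 : (1 : Matrix (Fin n) (Fin n) ℝ)ᵀ = 1 := Matrix.transpose_one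
  -- the two harmonic polynomials
  set h2 : MvPolynomial (Fin n) ℝ := (n:ℝ) • quadPoly (H * H) - c • quadPoly 1 with hh2
  set h4 : MvPolynomial (Fin n) ℝ :=
    ((n+4)*(n+2):ℝ) • (quadPoly H * quadPoly H)
      - (4*(n+2):ℝ) • (quadPoly 1 * quadPoly (H * H))
      + (2*c) • (quadPoly 1 * quadPoly 1) with hh4
  have lap2 : mvLaplacian h2 = 0 := by
    rw [hh2, lap_sub, lap_smul, lap_smul, lap_quadPoly', lap_quadPoly', Matrix.trace_one, Fintype.card_fin, ← hc]
    module
  have lap4 : mvLaplacian h4 = 0 := by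
    rw [hh4, lap_add, lap_sub, lap_smul, lap_smul, lap_smul,
      lap_mul' H H hH hH, lap_mul' 1 (H * H) h1 hHH, lap_mul' 1 1 h1 h1,
      htr, Matrix.trace_one, Fintype.card_fin, one_mul, one_mul, ← hc]
    module
  have hom2 : h2.IsHomogeneous 2 := by
    apply MvPolynomial.IsHomogeneous.sub
    · exact homog_smul _ (quadPoly_isHomogeneous _)
    · exact homog_smul _ (quadPoly_isHomogeneous _)
  have hom4 : h4.IsHomogeneous 4 := by
    have m1 : ((quadPoly H : MvPolynomial (Fin n) ℝ) * quadPoly H).IsHomogeneous 4 :=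
      (quadPoly_isHomogeneous H).mul (quadPoly_isHomogeneous H)
    have m2 : ((quadPoly 1 : MvPolynomial (Fin n) ℝ) * quadPoly (H * H)).IsHomogeneous 4 :=
      (quadPoly_isHomogeneous 1).mul (quadPoly_isHomogeneous (H * H))
    have m3 : ((quadPoly 1 : MvPolynomial (Fin n) ℝ) * quadPoly 1).IsHomogeneous 4 :=
      (quadPoly_isHomogeneous 1).mul (quadPoly_isHomogeneous 1)
    exact ((homog_smul _ m1).sub (homog_smul _ m2)).add (homog_smul _ m3)
  have d2 := hX.2 2 (by norm_num) (by norm_num) h2 hom2 lap2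
  have d4 := hX.2 4 (by norm_num) (by norm_num) h4 hom4 lap4
  -- evaluation facts
  have norm_sq : ∀ x ∈ X, MvPolynomial.eval (fun i => x i) (quadPoly 1) = r ^ 2 := by
    intro x hx
    rw [eval_quadPoly, Matrix.one_mulVec]
    have h : ‖x‖ = r := hX.1 x hx
    have hEuc := EuclideanSpace.norm_eq x
    rw [h] at hEuc
    have hnn : (0:ℝ) ≤ ∑ i, ‖x i‖ ^ 2 := by positivity
    have key : ∑ i, x i ^ 2 = r ^ 2 := by
      have hs : ∑ i, x i ^ 2 = ∑ i, ‖x i‖ ^ 2 := by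
        simp [Real.norm_eq_abs, sq_abs]
      rw [hs, ← Real.sq_sqrt hnn, ← hEuc]
    rw [show dotProduct (fun i => x i) (fun i => x i) = ∑ i, x i ^ 2 by
      simp [dotProduct, sq], key]
  -- abbreviations for the two sums
  set S2 : ℝ := ∑ x ∈ X, ((fun i => x i) ⬝ᵥ (H *ᵥ (fun i => x i))) ^ 2 with hS2
  set W : ℝ := ∑ x ∈ X, ((fun i => x i) ⬝ᵥ ((H * H) *ᵥ (fun i => x i))) with hW
  have e2 : (n:ℝ) * W - c * r ^ 2 * X.card = 0 := by
    have hev : ∀ x ∈ X, MvPolynomial.eval (fun i => x i) h2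
        = (n:ℝ) * ((fun i => x i) ⬝ᵥ ((H * H) *ᵥ (fun i => x i))) - c * r ^ 2 := by
      intro x hx
      rw [hh2, map_sub, smul_eval, smul_eval, eval_quadPoly, norm_sq x hx]
    rw [← d2, Finset.sum_congr rfl hev, Finset.sum_sub_distrib, ← Finset.mul_sum,
      Finset.sum_const, nsmul_eq_mul, hW]
    ring
  have e4 : ((n:ℝ)+4)*((n:ℝ)+2)*S2 - 4*((n:ℝ)+2)*r^2*W + 2*c*r^4*X.card = 0 := by
    have hev : ∀ x ∈ X, MvPolynomial.eval (fun i => x i) h4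
        = ((n:ℝ)+4)*((n:ℝ)+2) * ((fun i => x i) ⬝ᵥ (H *ᵥ (fun i => x i))) ^ 2
          - 4*((n:ℝ)+2)*r^2 * ((fun i => x i) ⬝ᵥ ((H * H) *ᵥ (fun i => x i)))
          + 2*c*r^4 := by
      intro x hx
      rw [hh4, map_add, map_sub, smul_eval, smul_eval, smul_eval, _root_.map_mul, _root_.map_mul, _root_.map_mul,
        norm_sq x hx, eval_quadPoly, eval_quadPoly]
      ring
    rw [← d4, Finset.sum_congr rfl hev, Finset.sum_add_distrib, Finset.sum_sub_distrib,
      ← Finset.mul_sum, ← Finset.mul_sum, Finset.sum_const, nsmul_eq_mul]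
    ring
  have hnR : (0:ℝ) < n := by exact_mod_cast hn
  have hn4 : ((n:ℝ) + 4) ≠ 0 := by positivity
  have key : ((n:ℝ)+4) * ((n:ℝ)*((n:ℝ)+2)*S2 - 2*r^4*X.card*c) = 0 := by
    linear_combination (n:ℝ) * e4 + 4*((n:ℝ)+2)*r^2 * e2
  have key2 : (n:ℝ)*((n:ℝ)+2)*S2 - 2*r^4*X.card*c = 0 :=
    (mul_eq_zero.mp key).resolve_left hn4
  rw [div_mul_eq_mul_div, eq_div_iff (by positivity : (n:ℝ)*((n:ℝ)+2) ≠ 0)]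
  linarith [key2]
end

section
/- Let H be a symmetric n×n real matrix with Tr(H) = 0, and set p_H(x) = (xᵀHx)². Define p_{H,4}(x) = p_H(x) − ‖x‖² · (4/(4+n)) · xᵀH²x + ‖x‖⁴ · (2/((4+n)(2+n))) · Tr(H²), p_{H,2}(x) = (8/(8+2n))·xᵀH²x − ‖x‖²·(8/(n(8+2n)))·Tr(H²), and p_{H,0} = (2/(n(n+2)))·Tr(H²). Then p_H = p_{H,4} + ‖x‖² p_{H,2} + ‖x‖⁴ p_{H,0}, and p_{H,4}, p_{H,2}, p_{H,0} are harmonic. -/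
open MvPolynomial Matrix

/-- The quadratic form `x ↦ xᵀ H x` as a polynomial. -/
noncomputable def quadFormPoly {n : ℕ} (H : Matrix (Fin n) (Fin n) ℝ) :
    MvPolynomial (Fin n) ℝ :=
  ∑ i, ∑ j, C (H i j) * (X i * X j)

/-- The polynomial `‖x‖² = ∑ i, x i ^ 2`. -/
noncomputable def normSqPoly (n : ℕ) : MvPolynomial (Fin n) ℝ := ∑ i, X i ^ 2

/-- The degree-4 harmonic component of `(xᵀHx)²`. -/
noncomputable def pH4 {n : ℕ} (H : Matrix (Fin n) (Fin n) ℝ) : MvPolynomial (Fin n) ℝ :=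
  quadFormPoly H ^ 2 - C (4 / (4 + (n : ℝ))) * (normSqPoly n * quadFormPoly (H * H))
    + C (2 / ((4 + (n : ℝ)) * (2 + (n : ℝ))) * Matrix.trace (H * H)) * normSqPoly n ^ 2

/-- The degree-2 harmonic component of `(xᵀHx)²`. -/
noncomputable def pH2 {n : ℕ} (H : Matrix (Fin n) (Fin n) ℝ) : MvPolynomial (Fin n) ℝ :=
  C (8 / (8 + 2 * (n : ℝ))) * quadFormPoly (H * H)
    - C (8 / ((n : ℝ) * (8 + 2 * (n : ℝ))) * Matrix.trace (H * H)) * normSqPoly n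

/-- The degree-0 harmonic component of `(xᵀHx)²`. -/
noncomputable def pH0 {n : ℕ} (H : Matrix (Fin n) (Fin n) ℝ) : MvPolynomial (Fin n) ℝ :=
  C (2 / ((n : ℝ) * ((n : ℝ) + 2)) * Matrix.trace (H * H))

section Aux

variable {n : ℕ}

lemma C_two_eq : (C 2 : MvPolynomial (Fin n) ℝ) = 2 := map_ofNat _ 2

lemma C_four_eq : (C 4 : MvPolynomial (Fin n) ℝ) = C 2 * C 2 := by
  rw [← C_mul]; norm_num

lemma C_eight_eq : (C 8 : MvPolynomial (Fin n) ℝ) = 2 * C 4 := by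
  rw [← C_two_eq, ← C_mul]; norm_num

lemma pderiv_quadFormPoly (H : Matrix (Fin n) (Fin n) ℝ) (hH : Hᵀ = H) (k : Fin n) :
    pderiv k (quadFormPoly H) = C 2 * ∑ j, C (H k j) * X j := by
  classical
  have hsym : ∀ i j, H i j = H j i := fun i j => by
    conv_lhs => rw [← hH, Matrix.transpose_apply]
  have hterm : ∀ i j : Fin n, pderiv k (C (H i j) * (X i * X j)) =
      (if i = k then C (H i j) * X j else 0) + (if j = k then C (H i j) * X i else 0) := by
    intro i j
    rw [pderiv_C_mul, pderiv_mul, pderiv_X, pderiv_X, Pi.single_apply, Pi.single_apply]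
    by_cases hik : i = k <;> by_cases hjk : j = k <;> simp [hik, hjk] <;> ring
  have hsplit : pderiv k (quadFormPoly H)
      = (∑ i, ∑ j, if i = k then C (H i j) * X j else 0)
        + (∑ i, ∑ j, if j = k then C (H i j) * X i else 0) := by
    rw [quadFormPoly, map_sum]
    rw [Finset.sum_congr rfl fun i _ => by
      rw [map_sum, Finset.sum_congr rfl fun j _ => hterm i j, Finset.sum_add_distrib]]
    rw [Finset.sum_add_distrib]
  rw [hsplit]
  have h1 : (∑ i, ∑ j, if i = k then C (H i j) * X j else 0)
      = ∑ j, C (H k j) * X j := by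
    rw [Finset.sum_congr rfl fun i _ => by
      rw [show (∑ j, if i = k then C (H i j) * X j else 0)
        = if i = k then ∑ j, C (H i j) * X j else 0 by split <;> simp]]
    rw [Finset.sum_ite_eq' Finset.univ k fun i => ∑ j, C (H i j) * X j]
    simp only [Finset.mem_univ, if_true]
  have h2 : (∑ i, ∑ j, if j = k then C (H i j) * X i else 0)
      = ∑ i, C (H k i) * X i := by
    rw [Finset.sum_congr rfl fun i _ => by
      rw [Finset.sum_ite_eq' Finset.univ k fun j => C (H i j) * X i]]
    simp only [Finset.mem_univ, if_true]
    exact Finset.sum_congr rfl fun i _ => by rw [hsym i k]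
  rw [h1, h2, C_two_eq, two_mul]

lemma pderiv_normSqPoly (k : Fin n) :
    pderiv k (normSqPoly n) = C 2 * X k := by
  classical
  have hterm : ∀ i : Fin n, pderiv k ((X i : MvPolynomial (Fin n) ℝ) ^ 2)
      = if i = k then 2 * X i else 0 := by
    intro i
    rw [pderiv_pow, pderiv_X, Pi.single_apply]
    split <;> simp
  rw [normSqPoly, map_sum, Finset.sum_congr rfl fun i _ => hterm i,
    Finset.sum_ite_eq' Finset.univ k fun i => 2 * (X i : MvPolynomial (Fin n) ℝ)]
  simp only [Finset.mem_univ, if_true]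
  rw [C_two_eq]

lemma sum_lin_mul_lin (A B : Matrix (Fin n) (Fin n) ℝ) :
    ∑ k, (∑ j, C (A k j) * X j) * (∑ j, C (B k j) * X j)
      = quadFormPoly (Aᵀ * B) := by
  calc ∑ k, (∑ j, C (A k j) * X j) * (∑ j, C (B k j) * X j)
      = ∑ k, ∑ i, ∑ j, (C (A k i) * X i) * (C (B k j) * X j) := by
        exact Finset.sum_congr rfl fun k _ => Finset.sum_mul_sum _ _ _ _
    _ = ∑ i, ∑ k, ∑ j, (C (A k i) * X i) * (C (B k j) * X j) := Finset.sum_comm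
    _ = ∑ i, ∑ j, ∑ k, (C (A k i) * X i) * (C (B k j) * X j) :=
        Finset.sum_congr rfl fun i _ => Finset.sum_comm
    _ = quadFormPoly (Aᵀ * B) := by
        simp only [quadFormPoly, Matrix.mul_apply, Matrix.transpose_apply, map_sum,
          Finset.sum_mul]
        refine Finset.sum_congr rfl fun i _ => Finset.sum_congr rfl fun j _ =>
          Finset.sum_congr rfl fun k _ => ?_
        rw [C_mul]
        ring

lemma sum_X_mul_lin (M : Matrix (Fin n) (Fin n) ℝ) :
    ∑ k, (X k : MvPolynomial (Fin n) ℝ) * (∑ j, C (M k j) * X j) = quadFormPoly M := by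
  simp only [quadFormPoly, Finset.mul_sum]
  exact Finset.sum_congr rfl fun k _ => Finset.sum_congr rfl fun j _ => by ring

lemma mvLaplacian_add (p q : MvPolynomial (Fin n) ℝ) :
    mvLaplacian (p + q) = mvLaplacian p + mvLaplacian q := by
  simp [mvLaplacian, Finset.sum_add_distrib]

lemma mvLaplacian_sub (p q : MvPolynomial (Fin n) ℝ) :
    mvLaplacian (p - q) = mvLaplacian p - mvLaplacian q := by
  simp [mvLaplacian, Finset.sum_sub_distrib]

lemma mvLaplacian_C_mul (a : ℝ) (p : MvPolynomial (Fin n) ℝ) :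
    mvLaplacian (C a * p) = C a * mvLaplacian p := by
  simp [mvLaplacian, pderiv_C_mul, Finset.mul_sum]

lemma mvLaplacian_C (a : ℝ) : mvLaplacian (C a : MvPolynomial (Fin n) ℝ) = 0 := by
  simp [mvLaplacian]

lemma mvLaplacian_mul (p q : MvPolynomial (Fin n) ℝ) :
    mvLaplacian (p * q) = mvLaplacian p * q + p * mvLaplacian q
      + 2 * ∑ i, pderiv i p * pderiv i q := by
  unfold mvLaplacian
  calc ∑ i, pderiv i (pderiv i (p * q))
      = ∑ i, (pderiv i (pderiv i p) * q + p * pderiv i (pderiv i q)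
          + 2 * (pderiv i p * pderiv i q)) := by
        refine Finset.sum_congr rfl fun i _ => ?_
        rw [pderiv_mul, map_add, pderiv_mul, pderiv_mul]
        ring
    _ = _ := by
        rw [Finset.sum_add_distrib, Finset.sum_add_distrib, ← Finset.sum_mul,
          ← Finset.mul_sum, ← Finset.mul_sum]

lemma mvLaplacian_quadFormPoly (H : Matrix (Fin n) (Fin n) ℝ) (hH : Hᵀ = H) :
    mvLaplacian (quadFormPoly H) = C (2 * Matrix.trace H) := by
  classical
  unfold mvLaplacian
  have hterm : ∀ k : Fin n, pderiv k (pderiv k (quadFormPoly H)) = C (2 * H k k) := by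
    intro k
    rw [pderiv_quadFormPoly H hH k, pderiv_C_mul, map_sum]
    have h : ∀ j : Fin n, pderiv k (C (H k j) * X j) = if j = k then C (H k j) else 0 := by
      intro j
      rw [pderiv_C_mul, pderiv_X, Pi.single_apply]
      split <;> simp
    rw [Finset.sum_congr rfl fun j _ => h j,
      Finset.sum_ite_eq' Finset.univ k fun j => C (H k j)]
    simp only [Finset.mem_univ, if_true]
    rw [← C_mul]
  rw [Finset.sum_congr rfl fun k _ => hterm k, ← map_sum]
  congr 1
  rw [Matrix.trace, Finset.mul_sum]
  rfl

lemma mvLaplacian_normSqPoly :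
    mvLaplacian (normSqPoly n) = (C (2 * (n : ℝ)) : MvPolynomial (Fin n) ℝ) := by
  unfold mvLaplacian
  have hterm : ∀ k : Fin n, pderiv k (pderiv k (normSqPoly n)) = C 2 := by
    intro k
    rw [pderiv_normSqPoly, pderiv_C_mul, pderiv_X_self, mul_one]
  rw [Finset.sum_congr rfl fun k _ => hterm k, Finset.sum_const, Finset.card_univ,
    Fintype.card_fin, nsmul_eq_mul, C_mul,
    show (C ((n : ℝ)) : MvPolynomial (Fin n) ℝ) = (n : MvPolynomial (Fin n) ℝ) from
      map_natCast C n]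
  ring

lemma lapQsq (H : Matrix (Fin n) (Fin n) ℝ) (hH : Hᵀ = H) (htr : Matrix.trace H = 0) :
    mvLaplacian (quadFormPoly H ^ 2) = C 8 * quadFormPoly (H * H) := by
  rw [sq, mvLaplacian_mul, mvLaplacian_quadFormPoly H hH, htr]
  have hsum : ∑ i, pderiv i (quadFormPoly H) * pderiv i (quadFormPoly H)
      = C 4 * quadFormPoly (Hᵀ * H) := by
    rw [Finset.sum_congr rfl fun k _ => by rw [pderiv_quadFormPoly H hH k],
      ← sum_lin_mul_lin H H, Finset.mul_sum]
    exact Finset.sum_congr rfl fun k _ => by rw [C_four_eq]; ring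
  rw [hsum, hH, C_eight_eq]
  simp
  ring
lemma lapNQ2 (M : Matrix (Fin n) (Fin n) ℝ) (hM : Mᵀ = M) :
    mvLaplacian (normSqPoly n * quadFormPoly M)
      = C (2 * (n : ℝ)) * quadFormPoly M + normSqPoly n * C (2 * Matrix.trace M)
        + C 8 * quadFormPoly M := by
  rw [mvLaplacian_mul, mvLaplacian_normSqPoly, mvLaplacian_quadFormPoly M hM]
  have hsum : ∑ i, pderiv i (normSqPoly n) * pderiv i (quadFormPoly M)
      = C 4 * quadFormPoly M := by
    rw [Finset.sum_congr rfl fun k _ => by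
      rw [pderiv_normSqPoly, pderiv_quadFormPoly M hM k],
      ← sum_X_mul_lin M, Finset.mul_sum]
    exact Finset.sum_congr rfl fun k _ => by rw [C_four_eq]; ring
  rw [hsum, C_eight_eq]
  ring

lemma lapNsq : mvLaplacian (normSqPoly n ^ 2)
    = C (4 * (n : ℝ) + 8) * normSqPoly n := by
  rw [sq, mvLaplacian_mul, mvLaplacian_normSqPoly]
  have hsum : ∑ i, pderiv i (normSqPoly n) * pderiv i (normSqPoly n)
      = C 4 * normSqPoly n := by
    rw [Finset.sum_congr rfl fun k _ => by rw [pderiv_normSqPoly]]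
    rw [normSqPoly, Finset.mul_sum]
    exact Finset.sum_congr rfl fun k _ => by rw [C_four_eq]; ring
  rw [hsum, show (C (4 * (n : ℝ) + 8) : MvPolynomial (Fin n) ℝ)
      = C (2 * (n : ℝ)) + C (2 * (n : ℝ)) + 2 * C 4 from by
    rw [← C_eight_eq, ← C_add, ← C_add]; congr 1; ring]
  ring

end Aux

theorem harmonic_decomposition_quadform_sq {n : ℕ} (hn : 0 < n)
    (H : Matrix (Fin n) (Fin n) ℝ) (hH : Hᵀ = H) (htr : Matrix.trace H = 0) :
    quadFormPoly H ^ 2 = pH4 H + normSqPoly n * pH2 H + normSqPoly n ^ 2 * pH0 H ∧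
    mvLaplacian (pH4 H) = 0 ∧ mvLaplacian (pH2 H) = 0 ∧ mvLaplacian (pH0 H) = 0 := by
  have hn' : (0 : ℝ) < n := by exact_mod_cast hn
  have hn0 : (n : ℝ) ≠ 0 := ne_of_gt hn'
  have h4n : (4 : ℝ) + n ≠ 0 := by positivity
  have h2n : (2 : ℝ) + n ≠ 0 := by positivity
  have h82n : (8 : ℝ) + 2 * n ≠ 0 := by positivity
  have hHH : (H * H)ᵀ = H * H := by rw [Matrix.transpose_mul, hH]
  refine ⟨?_, ?_, ?_, ?_⟩
  · rw [pH4, pH2, pH0]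
    have e1 : (C (8 / (8 + 2 * (n:ℝ))) : MvPolynomial (Fin n) ℝ)
        = C (4 / (4 + (n:ℝ))) := by
      congr 1
      field_simp
      ring
    have e2 : (C (2 / ((4 + (n:ℝ)) * (2 + (n:ℝ))) * Matrix.trace (H * H))
          : MvPolynomial (Fin n) ℝ)
        - C (8 / ((n:ℝ) * (8 + 2 * (n:ℝ))) * Matrix.trace (H * H))
        + C (2 / ((n:ℝ) * ((n:ℝ) + 2)) * Matrix.trace (H * H)) = 0 := by
      rw [← C_sub, ← C_add, show 2 / ((4 + (n:ℝ)) * (2 + (n:ℝ))) * Matrix.trace (H * H)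
          - 8 / ((n:ℝ) * (8 + 2 * (n:ℝ))) * Matrix.trace (H * H)
          + 2 / ((n:ℝ) * ((n:ℝ) + 2)) * Matrix.trace (H * H) = 0 from by
        field_simp
        ring, C_0]
    linear_combination (-(normSqPoly n * quadFormPoly (H * H))) * e1 - normSqPoly n ^ 2 * e2
  · rw [pH4, mvLaplacian_add, mvLaplacian_sub, mvLaplacian_C_mul, mvLaplacian_C_mul,
      lapQsq H hH htr, lapNQ2 (H * H) hHH, lapNsq]
    have hA : (C (8:ℝ) : MvPolynomial (Fin n) ℝ)
        - C (4 / (4 + (n:ℝ))) * C (2 * (n:ℝ)) - C (4 / (4 + (n:ℝ))) * C 8 = 0 := by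
      rw [← C_mul, ← C_mul, ← C_sub, ← C_sub,
        show (8:ℝ) - 4 / (4 + (n:ℝ)) * (2 * n) - 4 / (4 + (n:ℝ)) * 8 = 0 from by
          field_simp; ring, C_0]
    have hB : (C (2 / ((4 + (n:ℝ)) * (2 + (n:ℝ))) * Matrix.trace (H * H))
          : MvPolynomial (Fin n) ℝ) * C (4 * (n:ℝ) + 8)
        - C (4 / (4 + (n:ℝ))) * C (2 * Matrix.trace (H * H)) = 0 := by
      rw [← C_mul, ← C_mul, ← C_sub,
        show 2 / ((4 + (n:ℝ)) * (2 + (n:ℝ))) * Matrix.trace (H * H) * (4 * n + 8)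
          - 4 / (4 + (n:ℝ)) * (2 * Matrix.trace (H * H)) = 0 from by
          field_simp; ring, C_0]
    linear_combination quadFormPoly (H * H) * hA + normSqPoly n * hB
  · rw [pH2, mvLaplacian_sub, mvLaplacian_C_mul, mvLaplacian_C_mul,
      mvLaplacian_quadFormPoly _ hHH, mvLaplacian_normSqPoly]
    rw [← C_mul, ← C_mul, ← C_sub,
      show 8 / (8 + 2 * (n:ℝ)) * (2 * Matrix.trace (H * H))
        - 8 / ((n:ℝ) * (8 + 2 * (n:ℝ))) * Matrix.trace (H * H) * (2 * n) = 0 from by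
        field_simp; ring, C_0]
  · rw [pH0, mvLaplacian_C]
end

section
/- Let R = D_n (n ≥ 4) and let H = M(e_i − e_j, e_i + e_j) = (e_i−e_j)(e_i+e_j)ᵀ + (e_i+e_j)(e_i−e_j)ᵀ for some i < j. Then ∑_{x ∈ R} (xᵀHx)² = 32(n−2), while Tr(H²) = 8; hence H is an eigenvector of the quadratic form Q[H] = ∑_{x∈R}(xᵀHx)² with eigenvalue 4(n−2). -/
open Matrix
open scoped Classical

/-- The root system `Dₙ = {±eᵢ ± eⱼ : i < j} ⊆ ℝ^n`. -/
noncomputable def DRoots (n : ℕ) : Finset (Fin n → ℝ) :=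
  Finset.image (fun q : Fin n × Fin n × Bool × Bool =>
      ((if q.2.2.1 then (1 : ℝ) else -1) • (Pi.single q.1 (1 : ℝ) : Fin n → ℝ)
        + (if q.2.2.2 then (1 : ℝ) else -1) • (Pi.single q.2.1 (1 : ℝ) : Fin n → ℝ)))
    (Finset.univ.filter fun q => q.1 ≠ q.2.1)

/-! ### Auxiliary definitions and lemmas -/

noncomputable def phi (n : ℕ) (q : Fin n × Fin n × Bool × Bool) : Fin n → ℝ :=
  (if q.2.2.1 then (1 : ℝ) else -1) • (Pi.single q.1 (1 : ℝ) : Fin n → ℝ)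
    + (if q.2.2.2 then (1 : ℝ) else -1) • (Pi.single q.2.1 (1 : ℝ) : Fin n → ℝ)

lemma phi_apply {n : ℕ} (q : Fin n × Fin n × Bool × Bool) (a : Fin n) :
    phi n q a = (if q.2.2.1 then (1:ℝ) else -1) * (if a = q.1 then 1 else 0)
      + (if q.2.2.2 then (1:ℝ) else -1) * (if a = q.2.1 then 1 else 0) := by
  obtain ⟨k, l, s, t⟩ := q
  cases s <;> cases t <;> simp [phi, Pi.single_apply] <;> split_ifs <;> ring

lemma sgn_ne_zero (b : Bool) : (if b then (1:ℝ) else -1) ≠ 0 := by cases b <;> norm_num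

lemma sgn_inj {b b' : Bool} (h : (if b then (1:ℝ) else -1) = (if b' then (1:ℝ) else -1)) :
    b = b' := by cases b <;> cases b' <;> simp_all <;> norm_num at h

lemma phi_injOn {n : ℕ} : Set.InjOn (phi n)
    ((Finset.univ.filter fun q : Fin n × Fin n × Bool × Bool => q.1 < q.2.1) : Finset _) := by
  rintro ⟨k, l, s, t⟩ hq ⟨k', l', s', t'⟩ hq' heq
  simp only [Finset.coe_filter, Set.mem_setOf_eq, Finset.mem_univ, true_and] at hq hq'
  have hkl : k < l := hq
  have hkl' : k' < l' := hq'
  have happ : ∀ a, phi n (k, l, s, t) a = phi n (k', l', s', t') a := fun a => congrFun heq a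
  simp only [phi_apply] at happ
  by_cases hkk' : k = k'
  · subst hkk'
    by_cases hll' : l = l'
    · subst hll'
      have h1 := happ k
      have h2 := happ l
      simp [hkl.ne, hkl.ne'] at h1 h2
      rw [sgn_inj h1, sgn_inj h2]
    · exfalso
      have h2 := happ l
      simp [hkl.ne, hkl.ne', hll'] at h2
      exact sgn_ne_zero t h2
  · exfalso
    have h1 := happ k
    simp [hkl.ne, hkk'] at h1
    by_cases hkl'' : k = l'
    · have hk'k : k' < k := hkl''.symm ▸ hkl'
      have h3 := happ k'
      simp [hk'k.ne, (hk'k.trans hkl).ne, hkl'.ne] at h3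
      exact sgn_ne_zero s' h3.symm
    · simp [hkl''] at h1
      exact sgn_ne_zero s h1

lemma DRoots_eq_image (n : ℕ) :
    DRoots n = Finset.image (phi n)
      (Finset.univ.filter fun q : Fin n × Fin n × Bool × Bool => q.1 < q.2.1) := by
  unfold DRoots
  apply Finset.Subset.antisymm
  · intro x hx
    simp only [Finset.mem_image, Finset.mem_filter, Finset.mem_univ, true_and] at hx ⊢
    obtain ⟨⟨k, l, s, t⟩, hne, rfl⟩ := hx
    rcases lt_or_gt_of_ne hne with h | h
    · exact ⟨(k, l, s, t), h, rfl⟩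
    · exact ⟨(l, k, t, s), h, add_comm _ _⟩
  · apply Finset.image_subset_image
    intro q hq
    simp only [Finset.mem_filter, Finset.mem_univ, true_and] at hq ⊢
    exact hq.ne

noncomputable def cfun {n : ℕ} (i j a : Fin n) : ℝ :=
  (if i = a then (1:ℝ) else 0) - (if j = a then 1 else 0)

lemma cfun_sum {n : ℕ} (i j : Fin n) : ∑ a : Fin n, cfun i j a = 0 := by
  simp [cfun, Finset.sum_sub_distrib]

lemma cfun_sq {n : ℕ} {i j : Fin n} (hij : i ≠ j) (a : Fin n) :
    cfun i j a ^ 2 = (if i = a then (1:ℝ) else 0) + (if j = a then 1 else 0) := by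
  unfold cfun
  by_cases h1 : i = a
  · by_cases h2 : j = a
    · exact absurd (h1.trans h2.symm) hij
    · simp [h1, h2]
  · by_cases h2 : j = a <;> simp [h1, h2]

lemma cfun_sq_sum {n : ℕ} {i j : Fin n} (hij : i ≠ j) :
    ∑ a : Fin n, cfun i j a ^ 2 = 2 := by
  simp [cfun_sq hij, Finset.sum_add_distrib]
  norm_num

lemma total_sum {n : ℕ} {i j : Fin n} (hij : i ≠ j) :
    ∑ k : Fin n, ∑ l : Fin n, (cfun i j k + cfun i j l)^2 = 4 * n := by
  have h1 : ∀ k : Fin n, ∑ l : Fin n, (cfun i j k + cfun i j l)^2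
      = n * cfun i j k ^2 + 2 := by
    intro k
    have : ∀ l : Fin n, (cfun i j k + cfun i j l)^2
        = cfun i j k ^2 + 2 * cfun i j k * cfun i j l + cfun i j l ^ 2 := by
      intro l; ring
    rw [Finset.sum_congr rfl (fun l _ => this l)]
    rw [Finset.sum_add_distrib, Finset.sum_add_distrib, Finset.sum_const,
      ← Finset.mul_sum, cfun_sum, cfun_sq_sum hij]
    simp [mul_comm]
  rw [Finset.sum_congr rfl (fun k _ => h1 k), Finset.sum_add_distrib, Finset.sum_const,
    ← Finset.mul_sum, cfun_sq_sum hij]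
  simp
  ring

lemma lt_sum {n : ℕ} {i j : Fin n} (hij : i ≠ j) :
    ∑ k : Fin n, ∑ l : Fin n, (if k < l then (cfun i j k + cfun i j l)^2 else 0)
      = 2 * n - 4 := by
  set g : Fin n → Fin n → ℝ := fun k l => (cfun i j k + cfun i j l)^2 with hg
  have hsymm : ∀ k l, g k l = g l k := by intro k l; simp only [hg]; ring
  have hpt : ∀ k l : Fin n, (if k < l then g k l else 0) + (if l < k then g k l else 0)
      + (if k = l then g k l else 0) = g k l := by
    intro k l
    rcases lt_trichotomy k l with h | h | h
    · simp [h, not_lt_of_gt h, h.ne]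
    · simp [h, lt_irrefl]
    · simp [h, not_lt_of_gt h, h.ne']
  have htot := total_sum hij (n := n)
  have hdiag : ∑ k : Fin n, ∑ l : Fin n, (if k = l then g k l else 0) = 8 := by
    have : ∀ k : Fin n, ∑ l : Fin n, (if k = l then g k l else 0) = g k k := by
      intro k
      rw [Finset.sum_ite_eq]
      simp
    rw [Finset.sum_congr rfl (fun k _ => this k)]
    have : ∀ k : Fin n, g k k = 4 * cfun i j k ^ 2 := by intro k; simp only [hg]; ring
    rw [Finset.sum_congr rfl (fun k _ => this k), ← Finset.mul_sum, cfun_sq_sum hij]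
    norm_num
  have hswap : ∑ k : Fin n, ∑ l : Fin n, (if l < k then g k l else 0)
      = ∑ k : Fin n, ∑ l : Fin n, (if k < l then g k l else 0) := by
    rw [Finset.sum_comm]
    apply Finset.sum_congr rfl; intro k _
    apply Finset.sum_congr rfl; intro l _
    rw [hsymm]
  have key : ∑ k : Fin n, ∑ l : Fin n,
      ((if k < l then g k l else 0) + (if l < k then g k l else 0)
        + (if k = l then g k l else 0)) = 4 * n := by
    rw [Finset.sum_congr rfl fun k _ => Finset.sum_congr rfl fun l _ => hpt k l]
    exact htot
  simp only [Finset.sum_add_distrib] at key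
  rw [hswap, hdiag] at key
  linarith

lemma trace_vmv_mul {n : ℕ} (a b c d : Fin n → ℝ) :
    Matrix.trace (vecMulVec a b * vecMulVec c d) = (b ⬝ᵥ c) * (d ⬝ᵥ a) := by
  simp only [Matrix.trace, Matrix.diag, Matrix.mul_apply, Matrix.vecMulVec_apply, dotProduct,
    Finset.sum_mul, Finset.mul_sum]
  apply Finset.sum_congr rfl; intro x _
  apply Finset.sum_congr rfl; intro y _
  ring

lemma vmv_mulVec {n : ℕ} (a b : Fin n → ℝ) (x : Fin n → ℝ) :
    vecMulVec a b *ᵥ x = (b ⬝ᵥ x) • a := by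
  ext k
  simp only [Matrix.mulVec, Matrix.vecMulVec_apply, dotProduct, Pi.smul_apply, smul_eq_mul,
    Finset.sum_mul, Finset.mul_sum]
  apply Finset.sum_congr rfl; intro y _
  ring

lemma phi_sq {n : ℕ} {k l : Fin n} (hkl : k ≠ l) (s t : Bool) (a : Fin n) :
    phi n (k, l, s, t) a ^ 2 = (if a = k then (1:ℝ) else 0) + (if a = l then 1 else 0) := by
  rw [phi_apply]
  by_cases h1 : a = k
  · by_cases h2 : a = l
    · exact absurd (h1.symm.trans h2) hkl
    · simp [h1, h2, hkl, hkl.symm]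
  · by_cases h2 : a = l
    · simp [h1, h2, hkl, hkl.symm]
    · simp [h1, h2]

/-! ### Main theorem -/

theorem DRoots_eigenvalue_M {n : ℕ} (hn : 4 ≤ n) (i j : Fin n) (hij : i < j) :
    let H : Matrix (Fin n) (Fin n) ℝ :=
      Matrix.vecMulVec (Pi.single i 1 - Pi.single j 1) (Pi.single i 1 + Pi.single j 1)
        + Matrix.vecMulVec (Pi.single i 1 + Pi.single j 1) (Pi.single i 1 - Pi.single j 1)
    (∑ x ∈ DRoots n, (x ⬝ᵥ (H *ᵥ x)) ^ 2 = 32 * ((n : ℝ) - 2)) ∧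
      Matrix.trace (H * H) = 8 ∧
      ∑ x ∈ DRoots n, (x ⬝ᵥ (H *ᵥ x)) ^ 2 = 4 * ((n : ℝ) - 2) * Matrix.trace (H * H) := by
  intro H
  have hne : i ≠ j := hij.ne
  set u : Fin n → ℝ := Pi.single i 1 - Pi.single j 1 with hu
  set v : Fin n → ℝ := Pi.single i 1 + Pi.single j 1 with hv
  have hudot : ∀ x : Fin n → ℝ, u ⬝ᵥ x = x i - x j := by
    intro x
    simp [hu, sub_dotProduct, single_dotProduct]
  have hvdot : ∀ x : Fin n → ℝ, v ⬝ᵥ x = x i + x j := by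
    intro x
    simp [hv, add_dotProduct, single_dotProduct]
  have hxu : ∀ x : Fin n → ℝ, x ⬝ᵥ u = x i - x j := by
    intro x
    simp [hu, dotProduct_sub, dotProduct_single]
  have hxv : ∀ x : Fin n → ℝ, x ⬝ᵥ v = x i + x j := by
    intro x
    simp [hv, dotProduct_add, dotProduct_single]
  have hquad : ∀ x : Fin n → ℝ, x ⬝ᵥ (H *ᵥ x) = 2 * (x i ^ 2 - x j ^ 2) := by
    intro x
    show x ⬝ᵥ ((vecMulVec u v + vecMulVec v u) *ᵥ x) = _
    rw [Matrix.add_mulVec, vmv_mulVec, vmv_mulVec, dotProduct_add,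
      dotProduct_smul, dotProduct_smul, hvdot, hudot, hxu, hxv]
    simp only [smul_eq_mul]
    ring
  -- value of the quadratic form on each root
  have hterm : ∀ q ∈ (Finset.univ.filter
      fun q : Fin n × Fin n × Bool × Bool => q.1 < q.2.1),
      (phi n q ⬝ᵥ (H *ᵥ phi n q)) ^ 2 = 4 * (cfun i j q.1 + cfun i j q.2.1) ^ 2 := by
    rintro ⟨k, l, s, t⟩ hq
    simp only [Finset.mem_filter, Finset.mem_univ, true_and] at hq
    rw [hquad]
    rw [phi_sq hq.ne s t i, phi_sq hq.ne s t j]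
    unfold cfun
    ring
  -- the sum
  have hsum : ∑ x ∈ DRoots n, (x ⬝ᵥ (H *ᵥ x)) ^ 2 = 32 * ((n : ℝ) - 2) := by
    rw [DRoots_eq_image n,
      Finset.sum_image (fun a ha b hb h =>
        phi_injOn (Finset.mem_coe.mpr ha) (Finset.mem_coe.mpr hb) h)]
    rw [Finset.sum_congr rfl hterm, Finset.sum_filter]
    have step : ∑ q : Fin n × Fin n × Bool × Bool,
        (if q.1 < q.2.1 then 4 * (cfun i j q.1 + cfun i j q.2.1) ^ 2 else 0)
        = ∑ k : Fin n, ∑ l : Fin n, ∑ _s : Bool, ∑ _t : Bool,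
            (if k < l then 4 * (cfun i j k + cfun i j l) ^ 2 else 0) := by
      rw [Fintype.sum_prod_type]
      apply Finset.sum_congr rfl; intro k _
      rw [Fintype.sum_prod_type]
      apply Finset.sum_congr rfl; intro l _
      rw [Fintype.sum_prod_type]
    rw [step]
    have hbool : ∀ k l : Fin n, ∑ _s : Bool, ∑ _t : Bool,
        (if k < l then 4 * (cfun i j k + cfun i j l) ^ 2 else 0)
        = 16 * (if k < l then (cfun i j k + cfun i j l) ^ 2 else 0) := by
      intro k l
      rw [Fintype.sum_bool]
      rw [Fintype.sum_bool]
      split_ifs <;> ring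
    rw [Finset.sum_congr rfl fun k _ => Finset.sum_congr rfl fun l _ => hbool k l]
    have : ∑ k : Fin n, ∑ l : Fin n,
        16 * (if k < l then (cfun i j k + cfun i j l) ^ 2 else 0)
        = 16 * ∑ k : Fin n, ∑ l : Fin n,
            (if k < l then (cfun i j k + cfun i j l) ^ 2 else 0) := by
      rw [Finset.mul_sum]
      apply Finset.sum_congr rfl; intro k _
      rw [Finset.mul_sum]
    rw [this, lt_sum hne]
    ring
  have htr : Matrix.trace (H * H) = 8 := by
    have huu : u ⬝ᵥ u = 2 := by rw [hudot]; simp [hu, Pi.single_apply, hne, hne.symm]; norm_num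
    have hvv : v ⬝ᵥ v = 2 := by rw [hvdot]; simp [hv, Pi.single_apply, hne, hne.symm]; norm_num
    have huv : u ⬝ᵥ v = 0 := by rw [hudot]; simp [hv, Pi.single_apply, hne, hne.symm]
    have hvu : v ⬝ᵥ u = 0 := by rw [hvdot]; simp [hu, Pi.single_apply, hne, hne.symm]
    show Matrix.trace ((vecMulVec u v + vecMulVec v u) * (vecMulVec u v + vecMulVec v u)) = 8
    rw [add_mul, mul_add, mul_add, Matrix.trace_add, Matrix.trace_add, Matrix.trace_add,
      trace_vmv_mul, trace_vmv_mul, trace_vmv_mul, trace_vmv_mul, huu, hvv, huv, hvu]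
    ring
  refine ⟨hsum, htr, ?_⟩
  rw [hsum, htr]
  ring
end
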